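/- For every integer t ≥ 21, the integer n = 23·2^t + 1471 satisfies s(n) = s(n^2) = 13, where s is the binary digit sum. -/

import Mathlib

/-- binary digit sum -/
def s (n : ℕ) : ℕ := (Nat.digits 2 n).sum

lemma s_two (n : ℕ) : s n = n % 2 + s (n / 2) := by
  rcases Nat.eq_zero_or_pos n with h | h
  · simp [h, s]
  · rw [s, Nat.digits_def' (by norm_num) h]
    simp [s]

lemma s_split (a k b : ℕ) (hb : b < 2 ^ k) : s (a * 2 ^ k + b) = s a + s b := by
  induction k generalizing b with
  | zero =>
    simp only [pow_zero, Nat.lt_one_iff] at hb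
    subst hb; simp [s]
  | succ k ih =>
    have hb2 : b / 2 < 2 ^ k := by
      have h2 : (2:ℕ) ^ (k+1) = 2 ^ k * 2 := pow_succ 2 k
      omega
    have h1 : a * 2 ^ (k+1) + b = 2 * (a * 2 ^ k + b / 2) + b % 2 := by
      rw [pow_succ, ← mul_assoc]; omega
    have hm : (2 * (a * 2 ^ k + b / 2) + b % 2) % 2 = b % 2 := by omega
    have hd : (2 * (a * 2 ^ k + b / 2) + b % 2) / 2 = a * 2 ^ k + b / 2 := by omega
    rw [h1, s_two, hm, hd, ih (b / 2) hb2, s_two b]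
    omega

theorem stmt_7 (t : ℕ) (ht : 21 ≤ t) :
    s (23 * 2 ^ t + 1471) = 13 ∧ s ((23 * 2 ^ t + 1471) ^ 2) = 13 := by
  have hpow : (2:ℕ) ^ 21 ≤ 2 ^ t := Nat.pow_le_pow_right (by norm_num) ht
  constructor
  · have h1 : (1471 : ℕ) < 2 ^ t :=
      lt_of_lt_of_le (by norm_num) hpow
    have e1 : s 23 = 4 := by norm_num [s]
    have e2 : s 1471 = 9 := by norm_num [s]
    rw [s_split 23 t 1471 h1]
    omega
  · have hx : (2:ℕ) ^ (2 * t) = 2 ^ t * 2 ^ t := by rw [two_mul, pow_add]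
    have hx2 : (2:ℕ) ^ (t + 1) = 2 * 2 ^ t := by rw [pow_succ]; ring
    have key : (23 * 2 ^ t + 1471) ^ 2
        = 529 * 2 ^ (2 * t) + (33833 * 2 ^ (t + 1) + 2163841) := by
      rw [hx, hx2]; ring
    have h2 : (2163841 : ℕ) < 2 ^ (t + 1) := by
      calc (2163841 : ℕ) < 2 ^ 22 := by norm_num
        _ ≤ 2 ^ (t + 1) := Nat.pow_le_pow_right (by norm_num) (by omega)
    have h3 : 33833 * 2 ^ (t + 1) + 2163841 < 2 ^ (2 * t) := by
      calc 33833 * 2 ^ (t + 1) + 2163841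
          ≤ 33833 * 2 ^ (t + 1) + 2 ^ (t + 1) := by omega
        _ = 33834 * 2 ^ (t + 1) := by ring
        _ < 2 ^ 16 * 2 ^ (t + 1) := by
            exact Nat.mul_lt_mul_of_pos_right (by norm_num)
              (Nat.pow_pos (by norm_num))
        _ = 2 ^ (t + 17) := by rw [← pow_add]; ring_nf
        _ ≤ 2 ^ (2 * t) := Nat.pow_le_pow_right (by norm_num) (by omega)
    have hbig : s 2163841 = 5 := by
      have : (2163841 : ℕ) = 33 * 2 ^ 16 + 1153 := by norm_num
      rw [this, s_split 33 16 1153 (by norm_num)]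
      norm_num [s]
    have e1 : s 529 = 3 := by norm_num [s]
    have e2 : s 33833 = 5 := by norm_num [s]
    rw [key, s_split 529 (2 * t) _ h3, s_split 33833 (t + 1) 2163841 h2, hbig]
    omega
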